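/- Let {n, t, b} be an orthonormal basis of ℝ³, M a real 3 × 3 matrix with trace M = 0, M · t = 0 and M · b = 0, μ > 0 a real number, q a real number, and Λ ∈ ℝ³. Define the stress jump matrix Σ = −q · I + μ · (M + Mᵀ). If Σ · n = −Λ, then q = ⟨Λ, n⟩. -/

import Mathlib

open Matrix

/-- Pressure jump relation: with `{n, t, b}` an orthonormal basis of `ℝ³`,
`M` a traceless matrix annihilating the tangents `t` and `b`, `μ > 0`,
and stress jump `Σ = -q • 1 + μ • (M + Mᵀ)`, the condition `Σ ⬝ n = -Λ`
implies `q = ⟨Λ, n⟩`. -/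
theorem pressure_jump_relation
    (n t b : Fin 3 → ℝ)
    (hON : Orthonormal ℝ (![WithLp.toLp 2 n, WithLp.toLp 2 t, WithLp.toLp 2 b] : Fin 3 → EuclideanSpace ℝ (Fin 3)))
    (M : Matrix (Fin 3) (Fin 3) ℝ)
    (htrace : M.trace = 0)
    (ht : M.mulVec t = 0) (hb : M.mulVec b = 0)
    (μ : ℝ) (hμ : 0 < μ) (q : ℝ) (Λ : Fin 3 → ℝ)
    (hjump : (-q • (1 : Matrix (Fin 3) (Fin 3) ℝ) + μ • (M + Mᵀ)).mulVec n = -Λ) :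
    q = Λ ⬝ᵥ n := by
  classical
  have hspan : ⊤ ≤ Submodule.span ℝ (Set.range (![WithLp.toLp 2 n, WithLp.toLp 2 t, WithLp.toLp 2 b] : Fin 3 → EuclideanSpace ℝ (Fin 3))) :=
    (hON.linearIndependent.span_eq_top_of_card_eq_finrank (by simp)).ge
  let B : OrthonormalBasis (Fin 3) ℝ (EuclideanSpace ℝ (Fin 3)) := OrthonormalBasis.mk hON hspan
  have hinner : ∀ x y : EuclideanSpace ℝ (Fin 3), (inner ℝ x y : ℝ) = x ⬝ᵥ y := by
    intro x y
    simp [PiLp.inner_apply, dotProduct, RCLike.inner_apply, mul_comm]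
  have key : ∀ x : Fin 3 → ℝ, M.mulVec x = (n ⬝ᵥ x) • M.mulVec n := by
    intro x
    have hx := congrArg WithLp.ofLp (B.sum_repr' (WithLp.toLp 2 x))
    have hx' : ((n ⬝ᵥ x) • n + (t ⬝ᵥ x) • t + (b ⬝ᵥ x) • b : Fin 3 → ℝ) = x := by
      simpa [B, Fin.sum_univ_three, OrthonormalBasis.coe_mk, hinner] using hx
    calc M.mulVec x = M.mulVec ((n ⬝ᵥ x) • n + (t ⬝ᵥ x) • t + (b ⬝ᵥ x) • b) := by rw [hx']
      _ = (n ⬝ᵥ x) • M.mulVec n := by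
          rw [mulVec_add, mulVec_add, mulVec_smul, mulVec_smul, mulVec_smul, ht, hb]
          simp
  have hMn : M.mulVec n ⬝ᵥ n = 0 := by
    have hMij : ∀ i j, M i j = M.mulVec n i * n j := by
      intro i j
      have := congrFun (key (Pi.single j 1)) i
      simpa [mulVec_single, dotProduct, Pi.single_apply, mul_comm] using this
    have hTr : M.trace = M.mulVec n ⬝ᵥ n := by
      simp only [Matrix.trace, Matrix.diag, dotProduct]
      exact Finset.sum_congr rfl fun i _ => hMij i i
    rw [← hTr, htrace]
  have hn1 : ‖(![WithLp.toLp 2 n, WithLp.toLp 2 t, WithLp.toLp 2 b] : Fin 3 → EuclideanSpace ℝ (Fin 3)) 0‖ = 1 := hON.1 0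
  have hnn : (n ⬝ᵥ n) = 1 := by
    have h := hinner ((![WithLp.toLp 2 n, WithLp.toLp 2 t, WithLp.toLp 2 b] : Fin 3 → EuclideanSpace ℝ (Fin 3)) 0)
      ((![WithLp.toLp 2 n, WithLp.toLp 2 t, WithLp.toLp 2 b] : Fin 3 → EuclideanSpace ℝ (Fin 3)) 0)
    rw [real_inner_self_eq_norm_sq, hn1] at h
    have h' : (1 : ℝ) = n ⬝ᵥ n := by simpa using h
    exact h'.symm
  have h1 := congrArg (fun v => v ⬝ᵥ n) hjump
  simp only [add_mulVec, Matrix.smul_mulVec, one_mulVec, add_dotProduct,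
    smul_dotProduct, neg_mulVec, neg_dotProduct] at h1
  have h2 : Mᵀ.mulVec n ⬝ᵥ n = M.mulVec n ⬝ᵥ n := by
    rw [Matrix.mulVec_transpose, ← dotProduct_mulVec, dotProduct_comm]
  rw [hnn, h2, hMn] at h1
  have h4 : -q = -(Λ ⬝ᵥ n) := by simpa using h1
  linarith
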